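/- Any strict subset of masked ciphertexts reveals nothing about the corresponding partial sum: for a proper nonempty subset S ⊊ {1,…,n}, the distribution of (c_i)_{i∈S} with c_i = x_i + r_i (masks uniform subject to Σ r_i = 0) is uniform on G^{|S|}, hence the partial sum Σ_{i∈S} x_i is information-theoretically hidden. -/

import Mathlib

set_option maxHeartbeats 1000000 in
/-- Any strict subset of masked ciphertexts reveals nothing: for a nonempty proper subset
`S ⊊ {1,…,n}`, the ciphertexts `(c i)_{i ∈ S}` with `c i = x i + r i` (masks uniform on
`{r : ∑ i, r i = 0}`) are jointly uniform on `G^|S|`: every target tuple `v` is hit by the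
same fraction `1/|G|^|S|` of masks, independently of the inputs `x`; hence the partial sum
`∑_{i∈S} x i` is information-theoretically hidden. -/
theorem stmt_19 {G : Type*} [AddCommGroup G] [Fintype G] [DecidableEq G]
    (n : ℕ) (hn : 2 ≤ n) (x : Fin n → G)
    (S : Finset (Fin n)) (hS : S.Nonempty) (hS' : S ≠ Finset.univ) :
    ∀ v : Fin n → G,
      ((Finset.univ.filter (fun r : Fin n → G =>
          (∑ i, r i = 0) ∧ ∀ i ∈ S, x i + r i = v i)).card)
          * Fintype.card G ^ S.card =
        (Finset.univ.filter (fun r : Fin n → G => ∑ i, r i = 0)).card := by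
  classical
  intro v
  obtain ⟨j, hj⟩ : ∃ j, j ∉ S := by
    by_contra h
    push_neg at h
    exact hS' (Finset.eq_univ_iff_forall.mpr h)
  set A := Finset.univ.filter (fun r : Fin n → G =>
      (∑ i, r i = 0) ∧ ∀ i ∈ S, x i + r i = v i) with hA
  set B := Finset.univ.filter (fun r : Fin n → G => ∑ i, r i = 0) with hB
  set F : (Fin n → G) → (Fin n → G) × (↥S → G) := fun r =>
    (fun i => if i ∈ S then v i - x i
      else if i = j then r j + ∑ k ∈ S, (r k - (v k - x k)) else r i,
     fun i => r i) with hF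
  set Ginv : (Fin n → G) × (↥S → G) → (Fin n → G) := fun p i =>
    if h : i ∈ S then p.2 ⟨i, h⟩
    else if i = j then p.1 j + ∑ k ∈ S.attach, (p.1 k - p.2 k) else p.1 i with hG
  -- pointwise evaluation lemmas
  have hF1S : ∀ r : Fin n → G, ∀ i ∈ S, (F r).1 i = v i - x i := by
    intro r i hi; simp only [hF]; rw [if_pos hi]
  have hF1j : ∀ r : Fin n → G, (F r).1 j = r j + ∑ k ∈ S, (r k - (v k - x k)) := by
    intro r; simp [hF, hj]
  have hF1o : ∀ r : Fin n → G, ∀ i, i ∉ S → i ≠ j → (F r).1 i = r i := by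
    intro r i hi hij; simp only [hF]; rw [if_neg hi, if_neg hij]
  have hF2 : ∀ r : Fin n → G, ∀ k : ↥S, (F r).2 k = r k := fun _ _ => rfl
  have hGS : ∀ p : (Fin n → G) × (↥S → G), ∀ i (hi : i ∈ S), Ginv p i = p.2 ⟨i, hi⟩ := by
    intro p i hi; simp only [hG]; rw [dif_pos hi]
  have hGj : ∀ p : (Fin n → G) × (↥S → G),
      Ginv p j = p.1 j + ∑ k ∈ S.attach, (p.1 k - p.2 k) := by
    intro p; simp [hG, hj]
  have hGo : ∀ p : (Fin n → G) × (↥S → G), ∀ i, i ∉ S → i ≠ j → Ginv p i = p.1 i := by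
    intro p i hi hij; simp only [hG]; rw [dif_neg hi, if_neg hij]
  have sum_split : ∀ f : Fin n → G, ∑ i, f i = ∑ i ∈ S, f i + ∑ i ∈ Sᶜ, f i :=
    fun f => (Finset.sum_add_sum_compl S f).symm
  have hjc : j ∈ Sᶜ := Finset.mem_compl.mpr hj
  -- generic: total sum of a function described on S, at j, and elsewhere
  have sum_eval : ∀ f : Fin n → G,
      ∑ i, f i = ∑ i ∈ S, f i + f j + ∑ i ∈ Sᶜ.erase j, f i := by
    intro f
    rw [sum_split f, ← Finset.add_sum_erase _ _ hjc, add_assoc]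
  have key : B.card = (A ×ˢ (Finset.univ : Finset (↥S → G))).card := by
    apply Finset.card_nbij' F Ginv
    · -- F maps B into A ×ˢ univ
      intro r hr
      rw [hB, Finset.mem_coe, Finset.mem_filter] at hr
      rw [Finset.mem_coe, Finset.mem_product]
      refine ⟨?_, Finset.mem_univ _⟩
      rw [hA, Finset.mem_filter]
      refine ⟨Finset.mem_univ _, ?_, fun i hi => by rw [hF1S r i hi]; abel⟩
      rw [sum_eval (F r).1, hF1j r,
        Finset.sum_congr rfl (fun i hi => hF1S r i hi),
        Finset.sum_congr rfl (fun i hi => hF1o r i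
          (Finset.mem_compl.mp (Finset.mem_of_mem_erase hi)) (Finset.ne_of_mem_erase hi))]
      have h4 := hr.2
      rw [sum_eval r] at h4
      simp only [Finset.sum_sub_distrib] at *
      linear_combination (norm := abel) h4
    · -- Ginv maps A ×ˢ univ into B
      intro p hp
      rw [Finset.mem_coe, Finset.mem_product, hA, Finset.mem_filter] at hp
      obtain ⟨⟨-, hsum, hval⟩, -⟩ := hp
      rw [hB, Finset.mem_coe, Finset.mem_filter]
      refine ⟨Finset.mem_univ _, ?_⟩
      rw [sum_eval (Ginv p), hGj p,
        Finset.sum_congr rfl (fun i hi => hGo p i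
          (Finset.mem_compl.mp (Finset.mem_of_mem_erase hi)) (Finset.ne_of_mem_erase hi))]
      have h1 : ∑ i ∈ S, Ginv p i = ∑ k ∈ S.attach, p.2 k := by
        rw [← Finset.sum_attach S (fun i => Ginv p i)]
        exact Finset.sum_congr rfl (fun k _ => by rw [hGS p k k.2])
      have h2 : ∑ i ∈ S, p.1 i = ∑ k ∈ S.attach, p.1 (k : Fin n) :=
        (Finset.sum_attach S p.1).symm
      have h4 := hsum
      rw [sum_eval p.1, h2] at h4
      rw [h1]
      simp only [Finset.sum_sub_distrib] at *
      linear_combination (norm := abel) h4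
    · -- left inverse : Ginv (F r) = r
      intro r _
      funext i
      by_cases hi : i ∈ S
      · rw [hGS (F r) i hi]
      · by_cases hij : i = j
        · subst hij
          rw [hGj (F r), hF1j r]
          have h5 : ∑ k ∈ S.attach, ((F r).1 k - (F r).2 k)
              = ∑ k ∈ S.attach, ((v (k : Fin n) - x (k : Fin n)) - r (k : Fin n)) :=
            Finset.sum_congr rfl (fun k _ => by rw [hF1S r k k.2, hF2 r k])
          have h6 : ∑ k ∈ S.attach, ((v (k : Fin n) - x (k : Fin n)) - r (k : Fin n))
              = ∑ k ∈ S, ((v k - x k) - r k) :=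
            Finset.sum_attach S (fun k => (v k - x k) - r k)
          rw [h5, h6]
          simp only [Finset.sum_sub_distrib]
          abel
        · rw [hGo (F r) i hi hij, hF1o r i hi hij]
    · -- right inverse : F (Ginv p) = p
      intro p hp
      rw [Finset.mem_coe, Finset.mem_product, hA, Finset.mem_filter] at hp
      obtain ⟨⟨-, hsum, hval⟩, -⟩ := hp
      have hp1 : ∀ i ∈ S, p.1 i = v i - x i := by
        intro i h
        have := hval i h
        linear_combination (norm := abel) this
      have hfst : (F (Ginv p)).1 = p.1 := by
        funext i
        by_cases hi : i ∈ S
        · rw [hF1S (Ginv p) i hi, hp1 i hi]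
        · by_cases hij : i = j
          · subst hij
            rw [hF1j (Ginv p), hGj p]
            have h7 : ∑ k ∈ S, (Ginv p k - (v k - x k))
                = ∑ k ∈ S.attach, (p.2 k - (v (k : Fin n) - x (k : Fin n))) := by
              rw [← Finset.sum_attach S (fun k => Ginv p k - (v k - x k))]
              exact Finset.sum_congr rfl (fun k _ => by rw [hGS p k k.2])
            have h8 : ∑ k ∈ S.attach, (p.1 (k : Fin n) - p.2 k)
                = ∑ k ∈ S.attach, ((v (k : Fin n) - x (k : Fin n)) - p.2 k) :=
              Finset.sum_congr rfl (fun k _ => by rw [hp1 k k.2])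
            rw [h7, h8]
            simp only [Finset.sum_sub_distrib]
            abel
          · rw [hF1o (Ginv p) i hi hij, hGo p i hi hij]
      have hsnd : (F (Ginv p)).2 = p.2 := by
        funext k
        rw [hF2 (Ginv p) k, hGS p k k.2]
      exact Prod.ext hfst hsnd
  rw [key, Finset.card_product, Finset.card_univ]
  congr 1
  rw [Fintype.card_fun, Fintype.card_coe]
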